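/- Let E, E' and N be topological spaces, F : E → E' a continuous map, Z a subset of E', and ψ : N → Z a continuous surjection onto Z. Set X = F⁻¹(Z) ⊆ E, let M = {(x, y) ∈ E × N : F(x) = ψ(y)} carry the subspace topology of E × N, and let φ : M → X be the projection φ(x, y) = x (which is surjective onto X). If ψ is open at a point y ∈ N, then φ is open at (x, y) ∈ M for every x ∈ E with F(x) = ψ(y). -/
import Mathlib


open Filter Topology

/-- Let `E`, `E'`, `N` be topological spaces, `F : E → E'` continuous,
`Z ⊆ E'`, and `ψ : N → E'` a continuous map with range `Z` (a continuous surjection onto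
`Z`). Let `X = F⁻¹(Z)`, let `M = {(x, y) ∈ E × N : F x = ψ y}` with the subspace topology,
and let `φ : M → X` be `φ(x, y) = x`. If `ψ` is open at `y ∈ N` (with respect to the
subspace topology of `Z`), then `φ` is open at `(x, y)` for every `x` with `F x = ψ y`
(with respect to the subspace topology of `X`). -/
theorem statement13 {E E' N : Type*}
    [TopologicalSpace E] [TopologicalSpace E'] [TopologicalSpace N]
    (F : E → E') (hF : Continuous F) (Z : Set E')
    (ψ : N → E') (hψc : Continuous ψ) (hψr : Set.range ψ = Z)
    (y : N) (hopen : ∀ V ∈ 𝓝 y, ψ '' V ∈ 𝓝[Z] (ψ y))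
    (x : E) (hxy : F x = ψ y) :
    ∀ U ∈ 𝓝 (⟨(x, y), hxy⟩ : {p : E × N // F p.1 = ψ p.2}),
      (fun p : {p : E × N // F p.1 = ψ p.2} => p.1.1) '' U ∈ 𝓝[F ⁻¹' Z] x := by
  intro U hU
  rw [nhds_subtype_eq_comap] at hU
  obtain ⟨S, hS, hSU⟩ := Filter.mem_comap.mp hU
  rw [nhds_prod_eq] at hS
  obtain ⟨A, hA, B, hB, hAB⟩ := Filter.mem_prod_iff.mp hS
  obtain ⟨A', hA'A, hA'open, hxA'⟩ := mem_nhds_iff.mp hA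
  obtain ⟨T, hTopen, hyT, hTZ⟩ := mem_nhdsWithin.mp (hopen B hB)
  refine mem_nhdsWithin.mpr ⟨A' ∩ F ⁻¹' T, hA'open.inter (hTopen.preimage hF),
    ⟨hxA', by simpa [Set.mem_preimage, hxy] using hyT⟩, ?_⟩
  rintro x' ⟨⟨hx'A', hx'T⟩, hx'Z⟩
  have : F x' ∈ ψ '' B := hTZ ⟨hx'T, hx'Z⟩
  obtain ⟨y', hy'B, hy'⟩ := this
  refine ⟨⟨(x', y'), hy'.symm⟩, hSU ?_, rfl⟩
  exact hAB ⟨hA'A hx'A', hy'B⟩
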